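/- (Cancelation) Let M and N be Wall forms such that there exists an isomorphism of Wall forms M ⊕ W ≅ N ⊕ W, and suppose the complex L(M ⊕ W) is connected, i.e., any two morphisms W → M ⊕ W can be joined by a finite sequence of morphisms W → M ⊕ W in which consecutive morphisms have orthogonal images. Then there exists an isomorphism of Wall forms M ≅ N. -/

import Mathlib

/-!
Framework: `H`-pairs and Wall forms, following N. Perlmutter,
"Homological stability for the moduli spaces of products of spheres".

A form parameter `(G, ∂, π, ε)` is recorded together with the two
compatibility identities `∂(ε•h) = ∂(h)` and `π(∂(h)) = h + ε•h`, which hold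
in the geometric situation considered in the paper and which are exactly the
conditions needed for the standard Wall forms `W^g` to exist.
-/

section HPairs

/-- An `H`-pair: a pair of abelian groups together with a ℤ-bilinear
(i.e. biadditive) map `τ : M₋ × H → M₊`. -/
structure HPair (H : Type) [AddCommGroup H] where
  Neg : Type
  Pos : Type
  [negGrp : AddCommGroup Neg]
  [posGrp : AddCommGroup Pos]
  tau : Neg →+ H →+ Pos

attribute [instance] HPair.negGrp HPair.posGrp

variable {H : Type} [AddCommGroup H]

/-- An `H`-map of `H`-pairs. -/
structure HPairHom (M N : HPair H) where
  neg : M.Neg →+ N.Neg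
  pos : M.Pos →+ N.Pos
  comm : ∀ x h, pos (M.tau x h) = N.tau (neg x) h

/-- An isomorphism of `H`-pairs. -/
structure HPairIso (M N : HPair H) where
  toHom : HPairHom M N
  invHom : HPairHom N M
  left_neg : ∀ x, invHom.neg (toHom.neg x) = x
  right_neg : ∀ x, toHom.neg (invHom.neg x) = x
  left_pos : ∀ y, invHom.pos (toHom.pos y) = y
  right_pos : ∀ y, toHom.pos (invHom.pos y) = y

/-- An `H`-pair is finitely generated if both component groups are. -/
def HPair.FG (M : HPair H) : Prop :=
  AddGroup.FG M.Neg ∧ AddGroup.FG M.Pos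

/-- The componentwise direct sum of two `H`-pairs. -/
@[reducible] def HPair.sum (M N : HPair H) : HPair H where
  Neg := M.Neg × N.Neg
  Pos := M.Pos × N.Pos
  tau :=
    { toFun := fun x => (M.tau x.1).prod (N.tau x.2)
      map_zero' := by
        refine AddMonoidHom.ext fun h => ?_
        simp [Prod.ext_iff]
      map_add' := by
        intro x y
        refine AddMonoidHom.ext fun h => ?_
        simp [Prod.ext_iff] }

/-- The left inclusion `M → M ⊕ N`. -/
def HPairHom.inl (M N : HPair H) : HPairHom M (M.sum N) where
  neg := AddMonoidHom.inl M.Neg N.Neg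
  pos := AddMonoidHom.inl M.Pos N.Pos
  comm := by
    intro x h
    simp [HPair.sum, Prod.ext_iff]

/-- The right inclusion `N → M ⊕ N`. -/
def HPairHom.inr (M N : HPair H) : HPairHom N (M.sum N) where
  neg := AddMonoidHom.inr M.Neg N.Neg
  pos := AddMonoidHom.inr M.Pos N.Pos
  comm := by
    intro x h
    simp [HPair.sum, Prod.ext_iff]

/-- The `H`-pair `P⁰`, with `P⁰₋ = 0`, `P⁰₊ = ℤ` and `τ = 0`. -/
def P0 (H : Type) [AddCommGroup H] : HPair H where
  Neg := PUnit
  Pos := ℤ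
  tau := 0

/-- The `H`-pair `P¹`, with `P¹₋ = ℤ`, `P¹₊ = H` and `τ(t, h) = t • h`. -/
def P1 (H : Type) [AddCommGroup H] : HPair H where
  Neg := ℤ
  Pos := H
  tau := zmultiplesHom (H →+ H) (AddMonoidHom.id H)

/-- The generating-set length `d(H)`: the minimal `k` such that there is a
surjection `ℤ^k → H`. -/
noncomputable def dlen (H : Type) [AddCommGroup H] : ℕ :=
  sInf { k : ℕ | ∃ φ : (Fin k → ℤ) →+ H, Function.Surjective φ }

end HPairs

section WallForms

variable {H : Type} [AddCommGroup H]

/-- A form parameter `(G, ∂, π, ε)` for the category of `H`-pairs.  The two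
compatibility identities `bd_eps` and `pi_bd` hold in the geometric setting of
the paper and are needed for the standard Wall forms to exist. -/
structure FormParameter (H : Type) [AddCommGroup H] where
  G : HPair H
  bd : H →+ G.Pos
  pi : G.Pos →+ H
  eps : ℤ
  eps_pm : eps = 1 ∨ eps = -1
  bd_eps : ∀ h : H, bd (eps • h) = bd h
  pi_bd : ∀ h : H, pi (bd h) = h + eps • h

variable {P : FormParameter H}

/-- A Wall form structure (with parameter `P`) on the `H`-pair `C`. -/
structure WallAux (P : FormParameter H) (C : HPair H) where
  lam : C.Neg →+ C.Pos →+ ℤ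
  mu : C.Pos →+ C.Pos →+ H
  alphaNeg : C.Neg →+ P.G.Neg
  alphaPos : C.Pos → P.G.Pos
  mu_symm : ∀ y y', mu y y' = P.eps • mu y' y
  lam_tau : ∀ x x' h, lam x (C.tau x' h) = 0
  mu_tau : ∀ x h y, mu (C.tau x h) y = lam x y • h
  alphaPos_add : ∀ y y', alphaPos (y + y') = alphaPos y + alphaPos y' + P.bd (mu y y')
  mu_diag : ∀ y, mu y y = P.pi (alphaPos y)
  alphaPos_tau : ∀ x h, alphaPos (C.tau x h) = P.G.tau (alphaNeg x) h

/-- A Wall form with parameter `P`: a finitely generated `H`-pair together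
with a Wall form structure. -/
structure WallForm (P : FormParameter H) where
  carrier : HPair H
  fgNeg : AddGroup.FG carrier.Neg
  fgPos : AddGroup.FG carrier.Pos
  str : WallAux P carrier

/-- The property of an `H`-map to preserve all values of `λ`, `μ`, `α₋`, `α₊`. -/
def IsWallHom {C D : HPair H} (S : WallAux P C) (T : WallAux P D)
    (f : HPairHom C D) : Prop :=
  (∀ x y, T.lam (f.neg x) (f.pos y) = S.lam x y) ∧
  (∀ y y', T.mu (f.pos y) (f.pos y') = S.mu y y') ∧
  (∀ x, T.alphaNeg (f.neg x) = S.alphaNeg x) ∧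
  (∀ y, T.alphaPos (f.pos y) = S.alphaPos y)

/-- A morphism of Wall forms. -/
structure WallHom (M N : WallForm P) where
  hom : HPairHom M.carrier N.carrier
  isWall : IsWallHom M.str N.str hom

/-- An isomorphism of Wall forms: a morphism with a two-sided inverse morphism. -/
structure WallIso (M N : WallForm P) where
  toHom : WallHom M N
  invHom : WallHom N M
  left_neg : ∀ x, invHom.hom.neg (toHom.hom.neg x) = x
  right_neg : ∀ x, toHom.hom.neg (invHom.hom.neg x) = x
  left_pos : ∀ y, invHom.hom.pos (toHom.hom.pos y) = y
  right_pos : ∀ y, toHom.hom.pos (invHom.hom.pos y) = y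

end WallForms
section Extra

variable {H : Type} [AddCommGroup H] {P : FormParameter H}

/-- A subgroup of a finitely generated abelian group is finitely generated. -/
theorem addGroup_fg_subgroup {A : Type} [AddCommGroup A] (hA : AddGroup.FG A)
    (S : AddSubgroup A) : AddGroup.FG S := by
  haveI : Module.Finite ℤ A := Module.Finite.iff_addGroup_fg.mpr hA
  haveI : IsNoetherian ℤ A := isNoetherian_of_isNoetherianRing_of_finite ℤ A
  have h : (AddSubgroup.toIntSubmodule S).FG := IsNoetherian.noetherian _
  have h2 : Module.Finite ℤ (AddSubgroup.toIntSubmodule S) := Module.Finite.iff_fg.mpr h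
  exact Module.Finite.iff_addGroup_fg.mp h2

theorem addGroup_fg_of_module_finite {A : Type} [AddCommGroup A]
    [Module.Finite ℤ A] : AddGroup.FG A :=
  Module.Finite.iff_addGroup_fg.mp inferInstance

end Extra

section StdWall

variable {H : Type} [AddCommGroup H]

/-- The underlying `H`-pair of the standard Wall form of rank `g`:
`W^g₋ = ℤ^g` and `W^g₊ = ℤ^g × H^g`  (the first factor records the
`b`-coordinates, the second the `τ(a_i, -)`-coordinates). -/
@[reducible] def stdPair (H : Type) [AddCommGroup H] (g : ℕ) : HPair H where
  Neg := Fin g → ℤ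
  Pos := (Fin g → ℤ) × (Fin g → H)
  tau :=
    { toFun := fun x =>
        { toFun := fun h => (0, fun i => x i • h)
          map_zero' := by
            refine Prod.ext rfl ?_
            funext i
            simp
          map_add' := by
            intro h h'
            refine Prod.ext (by simp) ?_
            funext i
            simp [smul_add] }
      map_zero' := by
        refine AddMonoidHom.ext fun h => ?_
        refine Prod.ext rfl ?_
        funext i
        simp
      map_add' := by
        intro x x'
        refine AddMonoidHom.ext fun h => ?_
        refine Prod.ext (by simp) ?_
        funext i
        simp [add_smul] }

variable (P : FormParameter H)

/-- The standard Wall form `W^g` of rank `g` with parameter `P`. -/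
def stdWall [AddGroup.FG H] (g : ℕ) : WallForm P where
  carrier := stdPair H g
  fgNeg := by
    have : Module.Finite ℤ (Fin g → ℤ) := inferInstance
    exact addGroup_fg_of_module_finite
  fgPos := by
    haveI : Module.Finite ℤ H := Module.Finite.iff_addGroup_fg.mpr ‹AddGroup.FG H›
    have : Module.Finite ℤ ((Fin g → ℤ) × (Fin g → H)) := inferInstance
    exact addGroup_fg_of_module_finite
  str :=
    { lam :=
        { toFun := fun x =>
            { toFun := fun w => ∑ i, x i * w.1 i
              map_zero' := by simp
              map_add' := by
                intro w w'
                simp [mul_add, Finset.sum_add_distrib] }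
          map_zero' := by
            refine AddMonoidHom.ext fun w => ?_
            show (∑ i, (0 : Fin g → ℤ) i * w.1 i) = 0
            simp
          map_add' := by
            intro x x'
            refine AddMonoidHom.ext fun w => ?_
            simp [add_mul, Finset.sum_add_distrib] }
      mu :=
        { toFun := fun w =>
            { toFun := fun w' => (∑ i, w'.1 i • w.2 i) + P.eps • ∑ i, w.1 i • w'.2 i
              map_zero' := by simp
              map_add' := by
                intro w' w''
                simp only [Prod.fst_add, Prod.snd_add, Pi.add_apply, add_smul, smul_add,
                  Finset.sum_add_distrib]
                abel }
          map_zero' := by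
            refine AddMonoidHom.ext fun w' => ?_
            simp
          map_add' := by
            intro w w'
            refine AddMonoidHom.ext fun w'' => ?_
            simp only [Prod.fst_add, Prod.snd_add, Pi.add_apply, add_smul, smul_add,
              Finset.sum_add_distrib, AddMonoidHom.coe_mk, ZeroHom.coe_mk,
              AddMonoidHom.add_apply]
            abel }
      alphaNeg := 0
      alphaPos := fun w => P.bd (∑ i, w.1 i • w.2 i)
      mu_symm := by
        intro y y'
        have he : P.eps * P.eps = 1 := by
          rcases P.eps_pm with h | h <;> simp [h]
        show (∑ i, y'.1 i • y.2 i) + P.eps • ∑ i, y.1 i • y'.2 i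
            = P.eps • ((∑ i, y.1 i • y'.2 i) + P.eps • ∑ i, y'.1 i • y.2 i)
        rw [smul_add, smul_smul, he, one_smul, add_comm]
      lam_tau := by
        intro x x' h
        show (∑ i, x i * (0 : Fin _ → ℤ) i) = 0
        simp
      mu_tau := by
        intro x h y
        show (∑ i, y.1 i • (fun i => x i • h) i) + P.eps • ∑ i, (0 : Fin _ → ℤ) i • y.2 i
            = (∑ i, x i * y.1 i) • h
        simp only [Pi.zero_apply, zero_smul, Finset.sum_const_zero, smul_zero, add_zero]
        rw [Finset.sum_smul]
        congr 1
        funext i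
        rw [smul_smul, mul_comm]
      alphaPos_add := by
        intro y y'
        show P.bd (∑ i, (y.1 i + y'.1 i) • (y.2 i + y'.2 i))
            = P.bd (∑ i, y.1 i • y.2 i) + P.bd (∑ i, y'.1 i • y'.2 i)
              + P.bd ((∑ i, y'.1 i • y.2 i) + P.eps • ∑ i, y.1 i • y'.2 i)
        have expand : ∀ i : Fin _, (y.1 i + y'.1 i) • (y.2 i + y'.2 i)
            = (y.1 i • y.2 i + y'.1 i • y'.2 i) + (y'.1 i • y.2 i + y.1 i • y'.2 i) := by
          intro i
          rw [add_smul, smul_add, smul_add]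
          abel
        rw [Finset.sum_congr rfl fun i _ => expand i, Finset.sum_add_distrib,
          Finset.sum_add_distrib, Finset.sum_add_distrib, map_add, map_add, map_add, map_add,
          P.bd_eps]
      mu_diag := by
        intro y
        show (∑ i, y.1 i • y.2 i) + P.eps • ∑ i, y.1 i • y.2 i
            = P.pi (P.bd (∑ i, y.1 i • y.2 i))
        rw [P.pi_bd]
      alphaPos_tau := by
        intro x h
        show P.bd (∑ i, (0 : Fin _ → ℤ) i • (fun i => x i • h) i) = P.G.tau ((0 : _ →+ _) x) h
        simp }

variable {P}

/-- The `i`-th standard generator `a_i ∈ W^g₋`. -/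
def stdA [AddGroup.FG H] {g : ℕ} (i : Fin g) : (stdWall P g).carrier.Neg :=
  Pi.single i 1

/-- The `i`-th standard generator `b_i ∈ W^g₊`. -/
def stdB [AddGroup.FG H] {g : ℕ} (i : Fin g) : (stdWall P g).carrier.Pos :=
  (Pi.single i 1, 0)

end StdWall
section SubPairs

variable {H : Type} [AddCommGroup H] {P : FormParameter H}

/-- A sub-`H`-pair of the `H`-pair `C`. -/
structure SubPair (C : HPair H) where
  neg : AddSubgroup C.Neg
  pos : AddSubgroup C.Pos
  tau_mem : ∀ x ∈ neg, ∀ h, C.tau x h ∈ pos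

/-- The componentwise intersection of two sub-`H`-pairs. -/
def SubPair.inf {C : HPair H} (N N' : SubPair C) : SubPair C where
  neg := N.neg ⊓ N'.neg
  pos := N.pos ⊓ N'.pos
  tau_mem := fun x hx h => ⟨N.tau_mem x hx.1 h, N'.tau_mem x hx.2 h⟩

/-- The image of an `H`-map, as a sub-`H`-pair of the codomain. -/
def HPairHom.rangeSub {C D : HPair H} (f : HPairHom C D) : SubPair D where
  neg := f.neg.range
  pos := f.pos.range
  tau_mem := by
    rintro x ⟨a, rfl⟩ h
    exact ⟨C.tau a h, f.comm a h⟩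

/-- The kernel of an `H`-map, as a sub-`H`-pair of the domain. -/
def HPairHom.kerSub {C D : HPair H} (f : HPairHom C D) : SubPair C where
  neg := f.neg.ker
  pos := f.pos.ker
  tau_mem := by
    intro x hx h
    have hx' : f.neg x = 0 := hx
    have h2 : f.pos (C.tau x h) = D.tau (f.neg x) h := f.comm x h
    rw [hx'] at h2
    have h3 : f.pos (C.tau x h) = 0 := by
      rw [h2, map_zero, AddMonoidHom.zero_apply]
    exact h3

/-- The orthogonal complement of a sub-`H`-pair, with respect to a Wall form
structure `S` on the ambient `H`-pair. -/
def SubPair.perp {C : HPair H} (S : WallAux P C) (N : SubPair C) : SubPair C where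
  neg :=
    { carrier := { x | ∀ w ∈ N.pos, S.lam x w = 0 }
      add_mem' := by
        intro a b ha hb w hw
        rw [map_add, AddMonoidHom.add_apply, ha w hw, hb w hw, add_zero]
      zero_mem' := by
        intro w hw
        rw [map_zero, AddMonoidHom.zero_apply]
      neg_mem' := by
        intro a ha w hw
        rw [map_neg, AddMonoidHom.neg_apply, ha w hw, neg_zero] }
  pos :=
    { carrier := { y | (∀ v ∈ N.neg, S.lam v y = 0) ∧ ∀ w ∈ N.pos, S.mu y w = 0 }
      add_mem' := by
        intro a b ha hb
        refine ⟨fun v hv => ?_, fun w hw => ?_⟩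
        · rw [map_add, ha.1 v hv, hb.1 v hv, add_zero]
        · rw [map_add, AddMonoidHom.add_apply, ha.2 w hw, hb.2 w hw, add_zero]
      zero_mem' := by
        refine ⟨fun v hv => ?_, fun w hw => ?_⟩
        · rw [map_zero]
        · rw [map_zero, AddMonoidHom.zero_apply]
      neg_mem' := by
        intro a ha
        refine ⟨fun v hv => ?_, fun w hw => ?_⟩
        · rw [map_neg, ha.1 v hv, neg_zero]
        · rw [map_neg, AddMonoidHom.neg_apply, ha.2 w hw, neg_zero] }
  tau_mem := by
    intro x hx h
    refine ⟨fun v hv => S.lam_tau v x h, fun w hw => ?_⟩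
    rw [S.mu_tau x h w, hx w hw, zero_smul]

/-- Orthogonality of two sub-`H`-pairs with respect to a Wall form structure
`S`: trivial intersection and mutual containment in orthogonal complements. -/
def OrthogonalIn {C : HPair H} (S : WallAux P C) (N N' : SubPair C) : Prop :=
  N.neg ⊓ N'.neg = ⊥ ∧ N.pos ⊓ N'.pos = ⊥ ∧
  N.neg ≤ (N'.perp S).neg ∧ N.pos ≤ (N'.perp S).pos ∧
  N'.neg ≤ (N.perp S).neg ∧ N'.pos ≤ (N.perp S).pos

/-- The underlying `H`-pair of a sub-`H`-pair. -/
@[reducible] def SubPair.toPair {C : HPair H} (N : SubPair C) : HPair H where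
  Neg := N.neg
  Pos := N.pos
  tau :=
    { toFun := fun x =>
        { toFun := fun h => ⟨C.tau x h, N.tau_mem x x.2 h⟩
          map_zero' := by
            apply Subtype.ext
            simp
          map_add' := by
            intro h h'
            apply Subtype.ext
            simp }
      map_zero' := by
        refine AddMonoidHom.ext fun h => ?_
        apply Subtype.ext
        simp
      map_add' := by
        intro x x'
        refine AddMonoidHom.ext fun h => ?_
        apply Subtype.ext
        simp }

/-- The restriction of a Wall form structure to a sub-`H`-pair. -/
def SubPair.restrict {C : HPair H} (S : WallAux P C) (N : SubPair C) :
    WallAux P N.toPair where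
  lam :=
    { toFun := fun x => (S.lam (x : C.Neg)).comp N.pos.subtype
      map_zero' := by
        refine AddMonoidHom.ext fun y => ?_
        simp
      map_add' := by
        intro x x'
        refine AddMonoidHom.ext fun y => ?_
        simp }
  mu :=
    { toFun := fun y => (S.mu (y : C.Pos)).comp N.pos.subtype
      map_zero' := by
        refine AddMonoidHom.ext fun y => ?_
        simp
      map_add' := by
        intro y y'
        refine AddMonoidHom.ext fun y'' => ?_
        simp }
  alphaNeg := S.alphaNeg.comp N.neg.subtype
  alphaPos := fun y => S.alphaPos (y : C.Pos)
  mu_symm := fun y y' => S.mu_symm (y : C.Pos) y'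
  lam_tau := fun x x' h => S.lam_tau (x : C.Neg) x' h
  mu_tau := fun x h y => S.mu_tau (x : C.Neg) h y
  alphaPos_add := fun y y' => S.alphaPos_add (y : C.Pos) y'
  mu_diag := fun y => S.mu_diag (y : C.Pos)
  alphaPos_tau := fun x h => S.alphaPos_tau (x : C.Neg) h

/-- A sub-`H`-pair of (the carrier of) a Wall form is itself a Wall form, via
the restricted structure maps. -/
def SubPair.toWall {M : WallForm P} (N : SubPair M.carrier) : WallForm P where
  carrier := N.toPair
  fgNeg := addGroup_fg_subgroup M.fgNeg N.neg
  fgPos := addGroup_fg_subgroup M.fgPos N.pos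
  str := N.restrict M.str

end SubPairs
section SumAndRank

variable {H : Type} [AddCommGroup H] {P : FormParameter H}

/-- The orthogonal direct sum of two Wall forms. -/
def WallForm.sum (M N : WallForm P) : WallForm P where
  carrier := M.carrier.sum N.carrier
  fgNeg := by
    haveI : Module.Finite ℤ M.carrier.Neg := Module.Finite.iff_addGroup_fg.mpr M.fgNeg
    haveI : Module.Finite ℤ N.carrier.Neg := Module.Finite.iff_addGroup_fg.mpr N.fgNeg
    have : Module.Finite ℤ (M.carrier.Neg × N.carrier.Neg) := inferInstance
    exact Module.Finite.iff_addGroup_fg.mp this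
  fgPos := by
    haveI : Module.Finite ℤ M.carrier.Pos := Module.Finite.iff_addGroup_fg.mpr M.fgPos
    haveI : Module.Finite ℤ N.carrier.Pos := Module.Finite.iff_addGroup_fg.mpr N.fgPos
    have : Module.Finite ℤ (M.carrier.Pos × N.carrier.Pos) := inferInstance
    exact Module.Finite.iff_addGroup_fg.mp this
  str :=
    { lam :=
        { toFun := fun x => (M.str.lam x.1).coprod (N.str.lam x.2)
          map_zero' := by
            refine AddMonoidHom.ext fun y => ?_
            simp
          map_add' := by
            intro x x'
            refine AddMonoidHom.ext fun y => ?_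
            simp
            abel }
      mu :=
        { toFun := fun y => (M.str.mu y.1).coprod (N.str.mu y.2)
          map_zero' := by
            refine AddMonoidHom.ext fun y' => ?_
            simp
          map_add' := by
            intro y y'
            refine AddMonoidHom.ext fun y'' => ?_
            simp
            abel }
      alphaNeg := (M.str.alphaNeg).coprod (N.str.alphaNeg)
      alphaPos := fun y => M.str.alphaPos y.1 + N.str.alphaPos y.2
      mu_symm := by
        intro y y'
        show M.str.mu y.1 y'.1 + N.str.mu y.2 y'.2
            = P.eps • (M.str.mu y'.1 y.1 + N.str.mu y'.2 y.2)
        rw [smul_add, M.str.mu_symm y.1 y'.1, N.str.mu_symm y.2 y'.2]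
      lam_tau := by
        intro x x' h
        show M.str.lam x.1 (M.carrier.tau x'.1 h) + N.str.lam x.2 (N.carrier.tau x'.2 h) = 0
        rw [M.str.lam_tau, N.str.lam_tau, add_zero]
      mu_tau := by
        intro x h y
        show M.str.mu (M.carrier.tau x.1 h) y.1 + N.str.mu (N.carrier.tau x.2 h) y.2
            = (M.str.lam x.1 y.1 + N.str.lam x.2 y.2) • h
        rw [M.str.mu_tau, N.str.mu_tau, add_smul]
      alphaPos_add := by
        intro y y'
        show M.str.alphaPos (y.1 + y'.1) + N.str.alphaPos (y.2 + y'.2)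
            = (M.str.alphaPos y.1 + N.str.alphaPos y.2)
              + (M.str.alphaPos y'.1 + N.str.alphaPos y'.2)
              + P.bd (M.str.mu y.1 y'.1 + N.str.mu y.2 y'.2)
        rw [M.str.alphaPos_add, N.str.alphaPos_add, map_add]
        abel
      mu_diag := by
        intro y
        show M.str.mu y.1 y.1 + N.str.mu y.2 y.2
            = P.pi (M.str.alphaPos y.1 + N.str.alphaPos y.2)
        rw [map_add, M.str.mu_diag, N.str.mu_diag]
      alphaPos_tau := by
        intro x h
        show M.str.alphaPos (M.carrier.tau x.1 h) + N.str.alphaPos (N.carrier.tau x.2 h)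
            = P.G.tau (M.str.alphaNeg x.1 + N.str.alphaNeg x.2) h
        rw [M.str.alphaPos_tau, N.str.alphaPos_tau, map_add, AddMonoidHom.add_apply] }

variable [AddGroup.FG H]

/-- `rankGE M g` expresses the inequality `r(M) ≥ g` for the rank of a Wall
form: there exists a morphism of Wall forms `W^g → M`. -/
def rankGE (M : WallForm P) (g : ℕ) : Prop :=
  Nonempty (WallHom (stdWall P g) M)

/-- `srankGE M g` expresses the inequality `r̄(M) ≥ g` for the stable rank of
a Wall form: `r(M ⊕ W^j) ≥ g + j` for some `j`. -/
def srankGE (M : WallForm P) (g : ℕ) : Prop :=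
  ∃ j : ℕ, rankGE (M.sum (stdWall P j)) (g + j)

end SumAndRank

section Duality

variable {H : Type} [AddCommGroup H] {P : FormParameter H}

/-- The duality map `T⁰ : M₋ → Hom(M, P⁰)` of a Wall form. -/
def dualT0 (M : WallForm P) (v : M.carrier.Neg) : HPairHom M.carrier (P0 H) where
  neg := 0
  pos := M.str.lam v
  comm := by
    intro x h
    show M.str.lam v (M.carrier.tau x h) = ((P0 H).tau 0) h
    rw [M.str.lam_tau]
    show (0 : ℤ) = ((0 : _ →+ (H →+ ℤ)) 0) h
    rfl

/-- The duality map `T¹ : M₊ → Hom(M, P¹)` of a Wall form. -/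
def dualT1 (M : WallForm P) (w : M.carrier.Pos) : HPairHom M.carrier (P1 H) where
  neg := M.str.lam.flip w
  pos := M.str.mu.flip w
  comm := by
    intro x h
    show M.str.mu (M.carrier.tau x h) w = (P1 H).tau (M.str.lam x w) h
    rw [M.str.mu_tau]
    show M.str.lam x w • h = (M.str.lam x w • AddMonoidHom.id H) h
    simp

end Duality



section Proof

variable {H : Type} [AddCommGroup H] {P : FormParameter H}

/-- Composition of `H`-maps. -/
def HPairHom.comp {A B C : HPair H} (g : HPairHom B C) (f : HPairHom A B) :
    HPairHom A C where
  neg := g.neg.comp f.neg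
  pos := g.pos.comp f.pos
  comm := by intro x h; simp [f.comm, g.comm]

/-- Composition of Wall form morphisms. -/
def WallHom.comp {A B C : WallForm P} (g : WallHom B C) (f : WallHom A B) :
    WallHom A C where
  hom := g.hom.comp f.hom
  isWall := by
    obtain ⟨gl, gm, gn, gp⟩ := g.isWall
    obtain ⟨fl, fm, fn, fp⟩ := f.isWall
    exact ⟨fun x y => by simp [HPairHom.comp, gl, fl],
      fun y y' => by simp [HPairHom.comp, gm, fm],
      fun x => by simp [HPairHom.comp, gn, fn],
      fun y => by simp [HPairHom.comp, gp, fp]⟩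

/-- The identity isomorphism of Wall forms. -/
def WallIso.refl (A : WallForm P) : WallIso A A where
  toHom := ⟨⟨AddMonoidHom.id _, AddMonoidHom.id _, fun _ _ => rfl⟩,
    ⟨fun _ _ => rfl, fun _ _ => rfl, fun _ => rfl, fun _ => rfl⟩⟩
  invHom := ⟨⟨AddMonoidHom.id _, AddMonoidHom.id _, fun _ _ => rfl⟩,
    ⟨fun _ _ => rfl, fun _ _ => rfl, fun _ => rfl, fun _ => rfl⟩⟩
  left_neg := fun _ => rfl
  right_neg := fun _ => rfl
  left_pos := fun _ => rfl
  right_pos := fun _ => rfl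

/-- The inverse of a Wall form isomorphism. -/
def WallIso.symm {A B : WallForm P} (e : WallIso A B) : WallIso B A where
  toHom := e.invHom
  invHom := e.toHom
  left_neg := e.right_neg
  right_neg := e.left_neg
  left_pos := e.right_pos
  right_pos := e.left_pos

/-- Composition of Wall form isomorphisms. -/
def WallIso.trans {A B C : WallForm P} (e : WallIso A B) (e' : WallIso B C) :
    WallIso A C where
  toHom := e'.toHom.comp e.toHom
  invHom := e.invHom.comp e'.invHom
  left_neg := fun x => by
    simp [WallHom.comp, HPairHom.comp, e'.left_neg, e.left_neg]
  right_neg := fun x => by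
    simp [WallHom.comp, HPairHom.comp, e'.right_neg, e.right_neg]
  left_pos := fun y => by
    simp [WallHom.comp, HPairHom.comp, e'.left_pos, e.left_pos]
  right_pos := fun y => by
    simp [WallHom.comp, HPairHom.comp, e'.right_pos, e.right_pos]

/-- `α₊(0) = 0` in any Wall form structure. -/
theorem WallAux.alphaPos_zero {C : HPair H} (S : WallAux P C) :
    S.alphaPos 0 = 0 := by
  have h := S.alphaPos_add 0 0
  simp only [add_zero, map_zero, AddMonoidHom.zero_apply] at h
  -- h : S.alphaPos 0 = S.alphaPos 0 + S.alphaPos 0 + P.bd 0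
  have h2 : S.alphaPos 0 + S.alphaPos 0 = S.alphaPos 0 + 0 := by
    rw [add_zero]; exact h.symm
  exact (add_left_cancel h2)

end Proof


section Proof2

variable {H : Type} [AddCommGroup H] [AddGroup.FG H] {P : FormParameter H}

/-- The standard generator `a` of `W¹`. -/
def genA (P : FormParameter H) : (stdWall P 1).carrier.Neg := Pi.single 0 1

/-- The standard generator `b` of `W¹`. -/
def genB (P : FormParameter H) : (stdWall P 1).carrier.Pos := (Pi.single 0 1, 0)

/-- The image of the standard generator `a`. -/
def WallHom.A {X : WallForm P} (f : WallHom (stdWall P 1) X) : X.carrier.Neg :=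
  f.hom.neg (Pi.single 0 1)

/-- The image of the standard generator `b`. -/
def WallHom.B {X : WallForm P} (f : WallHom (stdWall P 1) X) : X.carrier.Pos :=
  f.hom.pos (Pi.single 0 1, 0)

theorem fin1_int (x : Fin 1 → ℤ) : x = x 0 • (Pi.single 0 1 : Fin 1 → ℤ) := by
  funext i
  have : i = 0 := Subsingleton.elim i 0
  subst this
  simp

theorem std_pos_decomp (y : (stdWall P 1).carrier.Pos) :
    y = y.1 0 • genB P + (stdWall P 1).carrier.tau (Pi.single 0 1) (y.2 0) := by
  refine Prod.ext ?_ ?_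
  · show y.1 = y.1 0 • (Pi.single 0 1 : Fin 1 → ℤ) + 0
    rw [add_zero]; exact fin1_int y.1
  · show y.2 = (y.1 0 • (0 : Fin 1 → H)) + fun i => (Pi.single 0 1 : Fin 1 → ℤ) i • y.2 0
    funext i
    have : i = 0 := Subsingleton.elim i 0
    subst this
    simp

theorem WallHom.neg_apply {X : WallForm P} (f : WallHom (stdWall P 1) X)
    (x : (stdWall P 1).carrier.Neg) : f.hom.neg x = x 0 • f.A := by
  conv_lhs => rw [fin1_int x]
  exact map_zsmul f.hom.neg (x 0) (Pi.single 0 1 : (stdWall P 1).carrier.Neg)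

theorem WallHom.pos_apply {X : WallForm P} (f : WallHom (stdWall P 1) X)
    (y : (stdWall P 1).carrier.Pos) :
    f.hom.pos y = y.1 0 • f.B + X.carrier.tau f.A (y.2 0) := by
  unfold WallHom.A WallHom.B
  conv_lhs => rw [std_pos_decomp y]
  rw [map_add, map_zsmul]
  exact congrArg₂ (· + ·) rfl (f.hom.comm _ _)

theorem WallHom.lam_AB {X : WallForm P} (f : WallHom (stdWall P 1) X) :
    X.str.lam f.A f.B = 1 := by
  unfold WallHom.A WallHom.B
  have h := f.isWall.1 (Pi.single 0 1) (Pi.single 0 1, 0)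
  rw [h]
  show (∑ i : Fin 1, (Pi.single 0 1 : Fin 1 → ℤ) i * (Pi.single 0 1 : Fin 1 → ℤ) i) = 1
  simp

theorem WallHom.mu_BB {X : WallForm P} (f : WallHom (stdWall P 1) X) :
    X.str.mu f.B f.B = 0 := by
  unfold WallHom.B
  have h := f.isWall.2.1 (Pi.single 0 1, 0) (Pi.single 0 1, 0)
  rw [h]
  show (∑ i : Fin 1, (Pi.single 0 1 : Fin 1 → ℤ) i • (0 : Fin 1 → H) i)
      + P.eps • ∑ i : Fin 1, (Pi.single 0 1 : Fin 1 → ℤ) i • (0 : Fin 1 → H) i = 0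
  simp

theorem WallHom.alphaNeg_A {X : WallForm P} (f : WallHom (stdWall P 1) X) :
    X.str.alphaNeg f.A = 0 := by
  unfold WallHom.A
  have h := f.isWall.2.2.1 (Pi.single 0 1)
  rw [h]; rfl

theorem WallHom.alphaPos_B {X : WallForm P} (f : WallHom (stdWall P 1) X) :
    X.str.alphaPos f.B = 0 := by
  unfold WallHom.B
  have h := f.isWall.2.2.2 (Pi.single 0 1, 0)
  rw [h]
  show P.bd (∑ i : Fin 1, (Pi.single 0 1 : Fin 1 → ℤ) i • (0 : Fin 1 → H) i) = 0
  simp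

theorem WallHom.mem_neg_range {X : WallForm P} (f : WallHom (stdWall P 1) X)
    (x : X.carrier.Neg) : x ∈ f.hom.neg.range ↔ ∃ t : ℤ, x = t • f.A := by
  constructor
  · rintro ⟨v, rfl⟩; exact ⟨v 0, f.neg_apply v⟩
  · rintro ⟨t, rfl⟩; exact ⟨t • Pi.single 0 1,
      by exact map_zsmul f.hom.neg t (Pi.single 0 1 : (stdWall P 1).carrier.Neg)⟩

theorem WallHom.mem_pos_range {X : WallForm P} (f : WallHom (stdWall P 1) X)
    (y : X.carrier.Pos) :
    y ∈ f.hom.pos.range ↔ ∃ (s : ℤ) (h : H), y = s • f.B + X.carrier.tau f.A h := by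
  constructor
  · rintro ⟨v, rfl⟩; exact ⟨v.1 0, v.2 0, f.pos_apply v⟩
  · rintro ⟨s, h, rfl⟩
    refine ⟨s • (Pi.single 0 1, 0) + (stdWall P 1).carrier.tau (Pi.single 0 1) h, ?_⟩
    rw [map_add]
    exact congrArg₂ (· + ·)
      (map_zsmul f.hom.pos s ((Pi.single 0 1, 0) : (stdWall P 1).carrier.Pos)) (f.hom.comm _ _)

/-- The orthogonal complement of (the image of) a morphism `W → X`, as a Wall
form. -/
def perpWall (X : WallForm P) (f : WallHom (stdWall P 1) X) : WallForm P :=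
  ((f.hom.rangeSub).perp X.str).toWall

theorem mem_perp_neg {X : WallForm P} (f : WallHom (stdWall P 1) X)
    (x : X.carrier.Neg) :
    x ∈ ((f.hom.rangeSub).perp X.str).neg ↔ X.str.lam x f.B = 0 := by
  constructor
  · intro hx
    exact hx f.B ((f.mem_pos_range f.B).2 ⟨1, 0, by rw [one_smul, map_zero, add_zero]⟩)
  · intro hx w hw
    obtain ⟨s, h, rfl⟩ := (f.mem_pos_range w).1 hw
    rw [map_add, map_zsmul, X.str.lam_tau, hx, smul_zero, add_zero]

theorem mem_perp_pos {X : WallForm P} (f : WallHom (stdWall P 1) X)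
    (y : X.carrier.Pos) :
    y ∈ ((f.hom.rangeSub).perp X.str).pos ↔
      X.str.lam f.A y = 0 ∧ X.str.mu y f.B = 0 := by
  constructor
  · rintro ⟨h1, h2⟩
    refine ⟨h1 f.A ((f.mem_neg_range f.A).2 ⟨1, (one_smul _ _).symm⟩), ?_⟩
    exact h2 f.B ((f.mem_pos_range f.B).2 ⟨1, 0, by rw [one_smul, map_zero, add_zero]⟩)
  · rintro ⟨h1, h2⟩
    constructor
    · intro v hv
      obtain ⟨t, rfl⟩ := (f.mem_neg_range v).1 hv
      rw [map_zsmul]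
      show t • X.str.lam f.A y = 0
      rw [h1, smul_zero]
    · intro w hw
      obtain ⟨s, h, rfl⟩ := (f.mem_pos_range w).1 hw
      rw [map_add, map_zsmul, h2, smul_zero, zero_add,
        X.str.mu_symm, X.str.mu_tau, h1, zero_smul, smul_zero]

end Proof2


section Proof3

variable {H : Type} [AddCommGroup H] [AddGroup.FG H] {P : FormParameter H}

/-- Builder: an ambient Wall isomorphism mapping one perp into another induces
an isomorphism of the perp Wall forms. -/
def perpIsoOfIso {X Y : WallForm P} (e : WallIso X Y)
    (f : WallHom (stdWall P 1) X) (g : WallHom (stdWall P 1) Y)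
    (h1 : ∀ x ∈ (f.hom.rangeSub.perp X.str).neg,
      e.toHom.hom.neg x ∈ (g.hom.rangeSub.perp Y.str).neg)
    (h2 : ∀ y ∈ (f.hom.rangeSub.perp X.str).pos,
      e.toHom.hom.pos y ∈ (g.hom.rangeSub.perp Y.str).pos)
    (h3 : ∀ x ∈ (g.hom.rangeSub.perp Y.str).neg,
      e.invHom.hom.neg x ∈ (f.hom.rangeSub.perp X.str).neg)
    (h4 : ∀ y ∈ (g.hom.rangeSub.perp Y.str).pos,
      e.invHom.hom.pos y ∈ (f.hom.rangeSub.perp X.str).pos) :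
    WallIso (perpWall X f) (perpWall Y g) where
  toHom :=
    { hom :=
        { neg := AddMonoidHom.mk' (fun x => ⟨e.toHom.hom.neg x.val, h1 x.val x.2⟩)
            (fun x x' => Subtype.ext (show e.toHom.hom.neg (x.val + x'.val) = e.toHom.hom.neg x.val + e.toHom.hom.neg x'.val from map_add _ _ _))
          pos := AddMonoidHom.mk' (fun y => ⟨e.toHom.hom.pos y.val, h2 y.val y.2⟩)
            (fun y y' => Subtype.ext (show e.toHom.hom.pos (y.val + y'.val) = e.toHom.hom.pos y.val + e.toHom.hom.pos y'.val from map_add _ _ _))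
          comm := fun x h => Subtype.ext (e.toHom.hom.comm x.val h) }
      isWall :=
        ⟨fun x y => e.toHom.isWall.1 x.val y.val,
         fun y y' => e.toHom.isWall.2.1 y.val y'.val,
         fun x => e.toHom.isWall.2.2.1 x.val,
         fun y => e.toHom.isWall.2.2.2 y.val⟩ }
  invHom :=
    { hom :=
        { neg := AddMonoidHom.mk' (fun x => ⟨e.invHom.hom.neg x.val, h3 x.val x.2⟩)
            (fun x x' => Subtype.ext (show e.invHom.hom.neg (x.val + x'.val) = e.invHom.hom.neg x.val + e.invHom.hom.neg x'.val from map_add _ _ _))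
          pos := AddMonoidHom.mk' (fun y => ⟨e.invHom.hom.pos y.val, h4 y.val y.2⟩)
            (fun y y' => Subtype.ext (show e.invHom.hom.pos (y.val + y'.val) = e.invHom.hom.pos y.val + e.invHom.hom.pos y'.val from map_add _ _ _))
          comm := fun x h => Subtype.ext (e.invHom.hom.comm x.val h) }
      isWall :=
        ⟨fun x y => e.invHom.isWall.1 x.val y.val,
         fun y y' => e.invHom.isWall.2.1 y.val y'.val,
         fun x => e.invHom.isWall.2.2.1 x.val,
         fun y => e.invHom.isWall.2.2.2 y.val⟩ }
  left_neg := fun x => Subtype.ext (e.left_neg x.val)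
  right_neg := fun x => Subtype.ext (e.right_neg x.val)
  left_pos := fun y => Subtype.ext (e.left_pos y.val)
  right_pos := fun y => Subtype.ext (e.right_pos y.val)

/-- Transport of perps along a Wall isomorphism. -/
def transportIso {X Y : WallForm P} (e : WallIso X Y)
    (g : WallHom (stdWall P 1) Y) :
    WallIso (perpWall X (e.invHom.comp g)) (perpWall Y g) := by
  have hB : (e.invHom.comp g).B = e.invHom.hom.pos g.B := rfl
  have hA : (e.invHom.comp g).A = e.invHom.hom.neg g.A := rfl
  refine perpIsoOfIso e _ g ?_ ?_ ?_ ?_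
  · intro x hx
    rw [mem_perp_neg] at hx ⊢
    have : g.B = e.toHom.hom.pos (e.invHom.hom.pos g.B) := (e.right_pos g.B).symm
    rw [this, e.toHom.isWall.1, ← hB, hx]
  · intro y hy
    rw [mem_perp_pos] at hy ⊢
    constructor
    · have : g.A = e.toHom.hom.neg (e.invHom.hom.neg g.A) := (e.right_neg g.A).symm
      rw [this, e.toHom.isWall.1, ← hA, hy.1]
    · have : g.B = e.toHom.hom.pos (e.invHom.hom.pos g.B) := (e.right_pos g.B).symm
      rw [this, e.toHom.isWall.2.1, ← hB, hy.2]
  · intro x hx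
    rw [mem_perp_neg] at hx ⊢
    rw [hB, e.invHom.isWall.1, hx]
  · intro y hy
    rw [mem_perp_pos] at hy ⊢
    exact ⟨by rw [hA, e.invHom.isWall.1, hy.1], by rw [hB, e.invHom.isWall.2.1, hy.2]⟩

end Proof3


section Proof4

variable {H : Type} [AddCommGroup H] [AddGroup.FG H] {P : FormParameter H}

/-- The standard inclusion `W → M ⊕ W` as a morphism of Wall forms. -/
def wallInr (M : WallForm P) : WallHom (stdWall P 1) (M.sum (stdWall P 1)) where
  hom := HPairHom.inr M.carrier (stdWall P 1).carrier
  isWall := by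
    refine ⟨fun x y => ?_, fun y y' => ?_, fun x => ?_, fun y => ?_⟩
    · show M.str.lam 0 0 + (stdWall P 1).str.lam x y = (stdWall P 1).str.lam x y
      simp
    · show M.str.mu 0 0 + (stdWall P 1).str.mu y y' = (stdWall P 1).str.mu y y'
      simp
    · show M.str.alphaNeg 0 + (stdWall P 1).str.alphaNeg x = (stdWall P 1).str.alphaNeg x
      simp
    · show M.str.alphaPos 0 + (stdWall P 1).str.alphaPos y = (stdWall P 1).str.alphaPos y
      rw [M.str.alphaPos_zero, zero_add]

theorem wallInr_perp_neg (M : WallForm P)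
    (x : (M.sum (stdWall P 1)).carrier.Neg) :
    x ∈ (((wallInr M).hom.rangeSub).perp (M.sum (stdWall P 1)).str).neg ↔
      x.2 = 0 := by
  rw [mem_perp_neg]
  have hB : (wallInr M).B = ((0 : M.carrier.Pos), ((Pi.single 0 1, 0) :
      (stdWall P 1).carrier.Pos)) := rfl
  rw [hB]
  have : (M.sum (stdWall P 1)).str.lam x ((0 : M.carrier.Pos),
      ((Pi.single 0 1, 0) : (stdWall P 1).carrier.Pos))
      = x.2 0 := by
    show M.str.lam x.1 0 + (∑ i : Fin 1, x.2 i * (Pi.single 0 1 : Fin 1 → ℤ) i) = x.2 0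
    simp
  erw [this]
  constructor
  · intro h
    rw [fin1_int x.2, h]; simp; rfl
  · intro h; rw [h]; rfl

theorem wallInr_perp_pos (M : WallForm P)
    (y : (M.sum (stdWall P 1)).carrier.Pos) :
    y ∈ (((wallInr M).hom.rangeSub).perp (M.sum (stdWall P 1)).str).pos ↔
      y.2 = 0 := by
  rw [mem_perp_pos]
  have h1 : (M.sum (stdWall P 1)).str.lam (wallInr M).A y = y.2.1 0 := by
    show M.str.lam 0 y.1 + (∑ i : Fin 1, (Pi.single 0 1 : Fin 1 → ℤ) i * y.2.1 i) = y.2.1 0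
    simp
  have h2 : (M.sum (stdWall P 1)).str.mu y (wallInr M).B = y.2.2 0 := by
    show M.str.mu y.1 0 + ((∑ i : Fin 1, (Pi.single 0 1 : Fin 1 → ℤ) i • y.2.2 i)
        + P.eps • ∑ i : Fin 1, y.2.1 i • (0 : Fin 1 → H) i) = y.2.2 0
    simp
  rw [h1, h2]
  constructor
  · rintro ⟨ha, hb⟩
    refine Prod.ext ?_ ?_
    · show y.2.1 = 0
      rw [fin1_int y.2.1, ha]; simp
    · show y.2.2 = 0
      funext i
      have : i = 0 := Subsingleton.elim i 0
      subst this; exact hb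
  · intro h
    rw [h]
    exact ⟨rfl, rfl⟩

/-- The orthogonal complement of the standard inclusion `W → M ⊕ W` is
isomorphic to `M`. -/
def inclPerpIso (M : WallForm P) :
    WallIso (perpWall (M.sum (stdWall P 1)) (wallInr M)) M where
  toHom :=
    { hom :=
        { neg := AddMonoidHom.mk' (fun x => x.val.1) (fun _ _ => rfl)
          pos := AddMonoidHom.mk' (fun y => y.val.1) (fun _ _ => rfl)
          comm := fun x h => rfl }
      isWall := by
        refine ⟨fun x y => ?_, fun y y' => ?_, fun x => ?_, fun y => ?_⟩
        · show M.str.lam x.val.1 y.val.1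
            = M.str.lam x.val.1 y.val.1 + (stdWall P 1).str.lam x.val.2 y.val.2
          rw [(wallInr_perp_neg M x.val).1 x.2]
          simp
        · show M.str.mu y.val.1 y'.val.1
            = M.str.mu y.val.1 y'.val.1 + (stdWall P 1).str.mu y.val.2 y'.val.2
          rw [(wallInr_perp_pos M y.val).1 y.2]
          simp
        · show M.str.alphaNeg x.val.1
            = M.str.alphaNeg x.val.1 + (stdWall P 1).str.alphaNeg x.val.2
          simp [stdWall]
          rfl
        · show M.str.alphaPos y.val.1
            = M.str.alphaPos y.val.1 + (stdWall P 1).str.alphaPos y.val.2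
          rw [(wallInr_perp_pos M y.val).1 y.2, (stdWall P 1).str.alphaPos_zero, add_zero] }
  invHom :=
    { hom :=
        { neg := AddMonoidHom.mk' (fun m => ⟨(m, 0), (wallInr_perp_neg M _).2 rfl⟩)
            (fun m m' => Subtype.ext (Prod.ext rfl (zero_add 0).symm))
          pos := AddMonoidHom.mk' (fun m => ⟨(m, 0), (wallInr_perp_pos M _).2 rfl⟩)
            (fun m m' => Subtype.ext (Prod.ext rfl (zero_add 0).symm))
          comm := fun m h => Subtype.ext (Prod.ext rfl (by
            show (0 : (stdWall P 1).carrier.Pos) = (stdWall P 1).carrier.tau 0 h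
            rw [map_zero]
            rfl)) }
      isWall := by
        refine ⟨fun x y => ?_, fun y y' => ?_, fun x => ?_, fun y => ?_⟩
        · show M.str.lam x y + (stdWall P 1).str.lam 0 0 = M.str.lam x y
          simp
        · show M.str.mu y y' + (stdWall P 1).str.mu 0 0 = M.str.mu y y'
          simp
        · show M.str.alphaNeg x + (stdWall P 1).str.alphaNeg 0 = M.str.alphaNeg x
          simp
        · show M.str.alphaPos y + (stdWall P 1).str.alphaPos 0 = M.str.alphaPos y
          rw [(stdWall P 1).str.alphaPos_zero, add_zero] }
  left_neg := fun x => Subtype.ext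
    (Prod.ext rfl ((wallInr_perp_neg M x.val).1 x.2).symm)
  right_neg := fun m => rfl
  left_pos := fun y => Subtype.ext
    (Prod.ext rfl ((wallInr_perp_pos M y.val).1 y.2).symm)
  right_pos := fun m => rfl

end Proof4


section Proof5

variable {H : Type} [AddCommGroup H] [AddGroup.FG H] {P : FormParameter H}

theorem WallAux.mu_tau_r {C : HPair H} (S : WallAux P C) (y : C.Pos) (x : C.Neg)
    (h : H) : S.mu y (C.tau x h) = P.eps • (S.lam x y • h) := by
  rw [S.mu_symm, S.mu_tau]

theorem WallAux.alphaPos_neg {C : HPair H} (S : WallAux P C) (v : C.Pos) :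
    S.alphaPos (-v) = P.bd (S.mu v v) - S.alphaPos v := by
  have h := S.alphaPos_add v (-v)
  rw [add_neg_cancel, S.alphaPos_zero] at h
  have h2 : S.mu v (-v) = -(S.mu v v) := by rw [map_neg]
  rw [h2, map_neg] at h
  -- 0 = αv + α(-v) - ∂μ(v,v)
  have := congrArg (fun z => z + P.bd (S.mu v v) - S.alphaPos v) h
  simp only [zero_add] at this
  rw [this]
  abel

theorem WallAux.alphaPos_zsmul {C : HPair H} (S : WallAux P C) (v : C.Pos)
    (hv : S.mu v v = 0) (n : ℤ) : S.alphaPos (n • v) = n • S.alphaPos v := by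
  have hnat : ∀ k : ℕ, S.alphaPos ((k : ℤ) • v) = (k : ℤ) • S.alphaPos v := by
    intro k
    induction k with
    | zero => simp [S.alphaPos_zero]
    | succ m ih =>
        have h1 : ((m + 1 : ℕ) : ℤ) • v = (m : ℤ) • v + v := by
          push_cast; rw [add_smul, one_smul]
        rw [h1, S.alphaPos_add, ih]
        have h2 : S.mu ((m : ℤ) • v) v = 0 := by
          rw [map_zsmul]
          simp only [AddMonoidHom.smul_apply, hv, smul_zero]
        rw [h2, map_zero, add_zero]
        push_cast
        rw [add_smul, one_smul]
  rcases n with k | k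
  · rw [Int.ofNat_eq_natCast]
    exact hnat k
  · have hcast : Int.negSucc k = -(((k + 1 : ℕ)) : ℤ) := by
      rw [Int.negSucc_eq]; push_cast; ring
    have hmu : S.mu (((k + 1 : ℕ) : ℤ) • v) (((k + 1 : ℕ) : ℤ) • v) = 0 := by
      rw [map_zsmul]
      simp only [AddMonoidHom.smul_apply, map_zsmul, hv, smul_zero]
    rw [hcast, neg_smul, S.alphaPos_neg, hmu, map_zero, zero_sub, hnat, ← neg_smul]

variable {X : WallForm P} (f g : WallHom (stdWall P 1) X)

/-- The ambient negative-part map of the elementary step isomorphism. -/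
def stepNegAux (x : X.carrier.Neg) : X.carrier.Neg :=
  x + X.str.lam x g.B • (f.A - g.A)

/-- The ambient positive-part map of the elementary step isomorphism. -/
def stepPosAux (y : X.carrier.Pos) : X.carrier.Pos :=
  y + X.str.lam g.A y • (f.B - g.B) + X.carrier.tau (f.A - g.A) (X.str.mu y g.B)

variable (hfg1 : X.str.lam f.A g.B = 0) (hgf1 : X.str.lam g.A f.B = 0)
  (hfg2 : X.str.mu f.B g.B = 0) (hgf2 : X.str.mu g.B f.B = 0)

theorem stepNegAux_add (x x' : X.carrier.Neg) :
    stepNegAux f g (x + x') = stepNegAux f g x + stepNegAux f g x' := by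
  simp only [stepNegAux, map_add, AddMonoidHom.add_apply, add_smul]
  abel

theorem stepPosAux_add (y y' : X.carrier.Pos) :
    stepPosAux f g (y + y') = stepPosAux f g y + stepPosAux f g y' := by
  simp only [stepPosAux, map_add, AddMonoidHom.add_apply, add_smul]
  abel

theorem stepAux_comm (x : X.carrier.Neg) (h : H) :
    stepPosAux f g (X.carrier.tau x h) = X.carrier.tau (stepNegAux f g x) h := by
  simp only [stepPosAux, stepNegAux, X.str.lam_tau, X.str.mu_tau, zero_smul, zero_add,
    add_zero, map_add, map_zsmul, AddMonoidHom.add_apply, AddMonoidHom.smul_apply]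

include hfg1 in
theorem stepNegAux_mem (x : X.carrier.Neg) :
    X.str.lam (stepNegAux f g x) g.B = 0 := by
  simp only [stepNegAux, map_add, map_sub, map_zsmul, AddMonoidHom.add_apply,
    AddMonoidHom.sub_apply, AddMonoidHom.smul_apply, hfg1, g.lam_AB, smul_eq_mul]
  ring

include hgf1 in
theorem stepPosAux_mem1 (y : X.carrier.Pos) :
    X.str.lam g.A (stepPosAux f g y) = 0 := by
  simp only [stepPosAux, map_add, map_sub, map_zsmul, X.str.lam_tau,
    AddMonoidHom.add_apply, AddMonoidHom.sub_apply, AddMonoidHom.smul_apply,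
    hgf1, g.lam_AB, smul_eq_mul]
  ring

include hfg1 hfg2 in
theorem stepPosAux_mem2 (y : X.carrier.Pos) :
    X.str.mu (stepPosAux f g y) g.B = 0 := by
  simp only [stepPosAux, map_add, map_sub, map_zsmul, X.str.mu_tau,
    AddMonoidHom.add_apply, AddMonoidHom.sub_apply, AddMonoidHom.smul_apply,
    hfg1, hfg2, g.lam_AB, g.mu_BB, smul_eq_mul]
  module

include hfg1 hgf1 in
theorem stepAux_lam (x : X.carrier.Neg) (y : X.carrier.Pos)
    (hx : X.str.lam x f.B = 0) (hy1 : X.str.lam f.A y = 0) :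
    X.str.lam (stepNegAux f g x) (stepPosAux f g y) = X.str.lam x y := by
  simp only [stepNegAux, stepPosAux, map_add, map_sub, map_zsmul, X.str.lam_tau,
    AddMonoidHom.add_apply, AddMonoidHom.sub_apply, AddMonoidHom.smul_apply,
    hx, hy1, hfg1, hgf1, f.lam_AB, g.lam_AB, smul_eq_mul]
  ring

include hfg1 hgf1 hfg2 hgf2 in
theorem stepAux_mu (y y' : X.carrier.Pos)
    (hy1 : X.str.lam f.A y = 0) (hy2 : X.str.mu y f.B = 0)
    (hy1' : X.str.lam f.A y' = 0) (hy2' : X.str.mu y' f.B = 0) :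
    X.str.mu (stepPosAux f g y) (stepPosAux f g y') = X.str.mu y y' := by
  have e1 : X.str.mu f.B y' = 0 := by rw [X.str.mu_symm, hy2', smul_zero]
  have e2 : X.str.mu g.B y' = P.eps • X.str.mu y' g.B := X.str.mu_symm _ _
  have e3 : X.str.mu y f.B = 0 := hy2
  simp only [stepPosAux, map_add, map_sub, map_zsmul, X.str.mu_tau,
    X.str.mu_tau_r, X.str.lam_tau,
    AddMonoidHom.add_apply, AddMonoidHom.sub_apply, AddMonoidHom.smul_apply,
    e1, e2, e3, hy1, hy1', hfg1, hgf1, hfg2, hgf2, f.lam_AB, g.lam_AB,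
    f.mu_BB, g.mu_BB]
  module

theorem stepAux_alphaNeg (x : X.carrier.Neg) :
    X.str.alphaNeg (stepNegAux f g x) = X.str.alphaNeg x := by
  simp only [stepNegAux, map_add, map_sub, map_zsmul, f.alphaNeg_A, g.alphaNeg_A]
  simp

include hfg1 hgf1 hfg2 hgf2 in
theorem stepAux_alphaPos (y : X.carrier.Pos)
    (hy1 : X.str.lam f.A y = 0) (hy2 : X.str.mu y f.B = 0) :
    X.str.alphaPos (stepPosAux f g y) = X.str.alphaPos y := by
  set s := X.str.lam g.A y with hs
  set c := X.str.mu y g.B with hc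
  have hvB : X.str.mu (f.B - g.B) (f.B - g.B) = 0 := by
    simp only [map_sub, AddMonoidHom.sub_apply, f.mu_BB, g.mu_BB, hfg2, hgf2]
    abel
  have hαv : X.str.alphaPos (f.B - g.B) = 0 := by
    have h1 : X.str.mu f.B (-g.B) = 0 := by rw [map_neg, hfg2, neg_zero]
    rw [sub_eq_add_neg, X.str.alphaPos_add, h1, map_zero, add_zero,
      X.str.alphaPos_neg, g.mu_BB, map_zero, zero_sub, f.alphaPos_B,
      g.alphaPos_B, neg_zero, add_zero]
  have hu1 : X.str.alphaPos (s • (f.B - g.B)) = 0 := by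
    rw [X.str.alphaPos_zsmul _ hvB, hαv, smul_zero]
  have hu2 : X.str.alphaPos (X.carrier.tau (f.A - g.A) c) = 0 := by
    rw [X.str.alphaPos_tau, map_sub, f.alphaNeg_A, g.alphaNeg_A, sub_zero,
      map_zero, AddMonoidHom.zero_apply]
  have hm1 : X.str.mu y (s • (f.B - g.B)) = -(s • c) := by
    rw [map_zsmul, map_sub, hy2, zero_sub, smul_neg]
  have hm2 : X.str.mu (y + s • (f.B - g.B)) (X.carrier.tau (f.A - g.A) c)
      = P.eps • (s • c) := by
    rw [X.str.mu_tau_r]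
    have hl : X.str.lam (f.A - g.A) (y + s • (f.B - g.B)) = s := by
      simp only [map_add, map_sub, map_zsmul, AddMonoidHom.add_apply,
        AddMonoidHom.sub_apply, AddMonoidHom.smul_apply, hy1, hfg1, hgf1,
        f.lam_AB, g.lam_AB, smul_eq_mul]
      ring
    rw [hl]
  show X.str.alphaPos (y + s • (f.B - g.B) + X.carrier.tau (f.A - g.A) c)
      = X.str.alphaPos y
  rw [X.str.alphaPos_add, X.str.alphaPos_add, hu1, hu2, hm1, hm2, P.bd_eps,
    map_neg, add_zero, add_zero]
  abel

include hgf1 in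
theorem stepAux_neg_inv (x : X.carrier.Neg) (hx : X.str.lam x f.B = 0) :
    stepNegAux g f (stepNegAux f g x) = x := by
  have ht : X.str.lam (stepNegAux f g x) f.B = X.str.lam x g.B := by
    simp only [stepNegAux, map_add, map_sub, map_zsmul, AddMonoidHom.add_apply,
      AddMonoidHom.sub_apply, AddMonoidHom.smul_apply, hx, f.lam_AB, hgf1,
      smul_eq_mul]
    ring
  show stepNegAux f g x + X.str.lam (stepNegAux f g x) f.B • (g.A - f.A) = x
  rw [ht, stepNegAux, show g.A - f.A = -(f.A - g.A) from (neg_sub _ _).symm,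
    smul_neg, add_neg_cancel_right]

include hfg1 hgf1 hgf2 in
theorem stepAux_pos_inv (y : X.carrier.Pos)
    (hy1 : X.str.lam f.A y = 0) (hy2 : X.str.mu y f.B = 0) :
    stepPosAux g f (stepPosAux f g y) = y := by
  have hsv : X.str.lam f.A (stepPosAux f g y) = X.str.lam g.A y := by
    simp only [stepPosAux, map_add, map_sub, map_zsmul, X.str.lam_tau,
      AddMonoidHom.add_apply, AddMonoidHom.sub_apply, AddMonoidHom.smul_apply,
      hy1, hfg1, f.lam_AB, smul_eq_mul]
    ring
  have hcv : X.str.mu (stepPosAux f g y) f.B = X.str.mu y g.B := by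
    simp only [stepPosAux, map_add, map_sub, map_zsmul, X.str.mu_tau,
      AddMonoidHom.add_apply, AddMonoidHom.sub_apply, AddMonoidHom.smul_apply,
      hy2, f.mu_BB, hgf2, f.lam_AB, hgf1, smul_eq_mul]
    module
  show stepPosAux f g y + X.str.lam f.A (stepPosAux f g y) • (g.B - f.B)
      + X.carrier.tau (g.A - f.A) (X.str.mu (stepPosAux f g y) f.B) = y
  rw [hsv, hcv, stepPosAux]
  simp only [map_sub, AddMonoidHom.sub_apply]
  module

end Proof5


section Proof6

variable {H : Type} [AddCommGroup H] [AddGroup.FG H] {P : FormParameter H}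

/-- The elementary step: orthogonal morphisms `W → X` have isomorphic
orthogonal complements. -/
def stepIso {X : WallForm P} (f g : WallHom (stdWall P 1) X)
    (horth : OrthogonalIn X.str f.hom.rangeSub g.hom.rangeSub) :
    WallIso (perpWall X f) (perpWall X g) := by
  obtain ⟨-, -, -, hfp, -, hgp⟩ := horth
  have hfB := (mem_perp_pos g f.B).1 (hfp ⟨(Pi.single 0 1, 0), rfl⟩)
  have hgB := (mem_perp_pos f g.B).1 (hgp ⟨(Pi.single 0 1, 0), rfl⟩)
  obtain ⟨hgf1, hfg2⟩ := hfB
  obtain ⟨hfg1, hgf2⟩ := hgB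
  exact
  { toHom :=
      { hom :=
          { neg := AddMonoidHom.mk'
              (fun x => ⟨stepNegAux f g x.val,
                (mem_perp_neg g _).2 (stepNegAux_mem f g hfg1 x.val)⟩)
              (fun x x' => Subtype.ext (stepNegAux_add f g x.val x'.val))
            pos := AddMonoidHom.mk'
              (fun y => ⟨stepPosAux f g y.val,
                (mem_perp_pos g _).2 ⟨stepPosAux_mem1 f g hgf1 y.val,
                  stepPosAux_mem2 f g hfg1 hfg2 y.val⟩⟩)
              (fun y y' => Subtype.ext (stepPosAux_add f g y.val y'.val))
            comm := fun x h => Subtype.ext (stepAux_comm f g x.val h) }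
        isWall :=
          ⟨fun x y => stepAux_lam f g hfg1 hgf1 x.val y.val
              ((mem_perp_neg f x.val).1 x.2) ((mem_perp_pos f y.val).1 y.2).1,
           fun y y' => stepAux_mu f g hfg1 hgf1 hfg2 hgf2 y.val y'.val
              ((mem_perp_pos f y.val).1 y.2).1 ((mem_perp_pos f y.val).1 y.2).2
              ((mem_perp_pos f y'.val).1 y'.2).1 ((mem_perp_pos f y'.val).1 y'.2).2,
           fun x => stepAux_alphaNeg f g x.val,
           fun y => stepAux_alphaPos f g hfg1 hgf1 hfg2 hgf2 y.val
              ((mem_perp_pos f y.val).1 y.2).1 ((mem_perp_pos f y.val).1 y.2).2⟩ }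
    invHom :=
      { hom :=
          { neg := AddMonoidHom.mk'
              (fun x => ⟨stepNegAux g f x.val,
                (mem_perp_neg f _).2 (stepNegAux_mem g f hgf1 x.val)⟩)
              (fun x x' => Subtype.ext (stepNegAux_add g f x.val x'.val))
            pos := AddMonoidHom.mk'
              (fun y => ⟨stepPosAux g f y.val,
                (mem_perp_pos f _).2 ⟨stepPosAux_mem1 g f hfg1 y.val,
                  stepPosAux_mem2 g f hgf1 hgf2 y.val⟩⟩)
              (fun y y' => Subtype.ext (stepPosAux_add g f y.val y'.val))
            comm := fun x h => Subtype.ext (stepAux_comm g f x.val h) }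
        isWall :=
          ⟨fun x y => stepAux_lam g f hgf1 hfg1 x.val y.val
              ((mem_perp_neg g x.val).1 x.2) ((mem_perp_pos g y.val).1 y.2).1,
           fun y y' => stepAux_mu g f hgf1 hfg1 hgf2 hfg2 y.val y'.val
              ((mem_perp_pos g y.val).1 y.2).1 ((mem_perp_pos g y.val).1 y.2).2
              ((mem_perp_pos g y'.val).1 y'.2).1 ((mem_perp_pos g y'.val).1 y'.2).2,
           fun x => stepAux_alphaNeg g f x.val,
           fun y => stepAux_alphaPos g f hgf1 hfg1 hgf2 hfg2 y.val
              ((mem_perp_pos g y.val).1 y.2).1 ((mem_perp_pos g y.val).1 y.2).2⟩ }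
    left_neg := fun x => Subtype.ext
      (stepAux_neg_inv f g hgf1 x.val ((mem_perp_neg f x.val).1 x.2))
    right_neg := fun x => Subtype.ext
      (stepAux_neg_inv g f hfg1 x.val ((mem_perp_neg g x.val).1 x.2))
    left_pos := fun y => Subtype.ext
      (stepAux_pos_inv f g hfg1 hgf1 hgf2 y.val
        ((mem_perp_pos f y.val).1 y.2).1 ((mem_perp_pos f y.val).1 y.2).2)
    right_pos := fun y => Subtype.ext
      (stepAux_pos_inv g f hgf1 hfg1 hfg2 y.val
        ((mem_perp_pos g y.val).1 y.2).1 ((mem_perp_pos g y.val).1 y.2).2) }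

end Proof6


/-- **Cancelation.** If `M ⊕ W ≅ N ⊕ W` as Wall forms and the
complex `L(M ⊕ W)` is connected, then `M ≅ N` as Wall forms. -/
theorem statement_7 {H : Type} [AddCommGroup H] [AddGroup.FG H]
    (P : FormParameter H) (M N : WallForm P)
    (e : WallIso (M.sum (stdWall P 1)) (N.sum (stdWall P 1)))
    (hconn : ∀ f f' : WallHom (stdWall P 1) (M.sum (stdWall P 1)),
      Relation.ReflTransGen
        (fun a b : WallHom (stdWall P 1) (M.sum (stdWall P 1)) =>
          OrthogonalIn (M.sum (stdWall P 1)).str a.hom.rangeSub b.hom.rangeSub) f f') :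
    Nonempty (WallIso M N) := by
  have key : ∀ u v : WallHom (stdWall P 1) (M.sum (stdWall P 1)),
      Relation.ReflTransGen
        (fun a b : WallHom (stdWall P 1) (M.sum (stdWall P 1)) =>
          OrthogonalIn (M.sum (stdWall P 1)).str a.hom.rangeSub b.hom.rangeSub) u v →
      Nonempty (WallIso (perpWall _ u) (perpWall _ v)) := by
    intro u v h
    induction h with
    | refl => exact ⟨WallIso.refl _⟩
    | tail _ hstep ih => exact ⟨ih.some.trans (stepIso _ _ hstep)⟩
  obtain ⟨i⟩ := key (wallInr M) (e.invHom.comp (wallInr N))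
    (hconn (wallInr M) (e.invHom.comp (wallInr N)))
  exact ⟨(((inclPerpIso M).symm.trans i).trans
    (transportIso e (wallInr N))).trans (inclPerpIso N)⟩
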